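/- Let G = (V, E_b ∪ E_r) be a finite graph with disjoint edge sets E_b (blue edges) and E_r (red edges), in which every vertex is incident to at most δ_b ≥ 1 blue edges and to at most δ_r ≥ 1 red edges. Then there exist matchings M_1, M_2, …, M_γ ⊆ E_b with γ ≤ δ_b·(2δ_r + 2) such that (a) every blue edge belongs to at least one M_i, and (b) for every i, there is no red edge both of whose endpoints are matched by M_i (i.e., both endpoints are covered by edges of M_i). -/

import Mathlib

open scoped BigOperators

/-- Greedy coloring: a finite graph in which every vertex has fewer than `n`
neighbors admits a proper coloring with `n` colors. -/
lemma greedy_coloring {W : Type} [Fintype W] (H : SimpleGraph W) (n : ℕ) (hn : 0 < n)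
    (hdeg : ∀ v : W, ({u | H.Adj v u} : Set W).ncard < n) :
    ∃ C : W → Fin n, ∀ u v, H.Adj u v → C u ≠ C v := by
  classical
  suffices h : ∀ s : Finset W, ∃ C : W → Fin n,
      ∀ u ∈ s, ∀ v ∈ s, H.Adj u v → C u ≠ C v by
    obtain ⟨C, hC⟩ := h Finset.univ
    exact ⟨C, fun u v h => hC u (Finset.mem_univ u) v (Finset.mem_univ v) h⟩
  intro s
  induction s using Finset.induction_on with
  | empty => exact ⟨fun _ => ⟨0, hn⟩, by simp⟩
  | @insert a s ha ih =>
    obtain ⟨C, hC⟩ := ih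
    set colors : Finset (Fin n) := (s.filter (fun x => H.Adj a x)).image C with hcolors
    have hsub : ((s.filter (fun x => H.Adj a x)) : Set W) ⊆ {u | H.Adj a u} := by
      intro x hx
      simp only [Finset.coe_filter, Set.mem_setOf_eq] at hx ⊢
      exact hx.2
    have hcard : colors.card < n := by
      calc colors.card ≤ (s.filter (fun x => H.Adj a x)).card := Finset.card_image_le
        _ = ((s.filter (fun x => H.Adj a x)) : Set W).ncard := (Set.ncard_coe_finset _).symm
        _ ≤ ({u | H.Adj a u} : Set W).ncard := Set.ncard_le_ncard hsub (Set.toFinite _)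
        _ < n := hdeg a
    have hne : colors ≠ Finset.univ := by
      intro h
      rw [h, Finset.card_univ, Fintype.card_fin] at hcard
      exact lt_irrefl _ hcard
    have hcex : ∃ c : Fin n, c ∉ colors := by
      by_contra hcon
      push_neg at hcon
      exact hne (Finset.eq_univ_iff_forall.mpr hcon)
    obtain ⟨c, hc⟩ := hcex
    refine ⟨Function.update C a c, ?_⟩
    intro u hu v hv huv
    have hne_av : ∀ x ∈ s, x ≠ a := fun x hx hxa => ha (hxa ▸ hx)
    rcases Finset.mem_insert.mp hu with rfl | hu' <;>
      rcases Finset.mem_insert.mp hv with hv1 | hv'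
    · exact absurd (hv1 ▸ huv) (H.irrefl)
    · rw [Function.update_self, Function.update_of_ne (hne_av v hv')]
      intro hcv
      exact hc (hcolors ▸ Finset.mem_image.mpr
        ⟨v, Finset.mem_filter.mpr ⟨hv', huv⟩, hcv.symm⟩)
    · subst hv1
      rw [Function.update_self, Function.update_of_ne (hne_av u hu')]
      intro hcu
      exact hc (hcolors ▸ Finset.mem_image.mpr
        ⟨u, Finset.mem_filter.mpr ⟨hu', huv.symm⟩, hcu⟩)
    · rw [Function.update_of_ne (hne_av u hu'), Function.update_of_ne (hne_av v hv')]
      exact hC u hu' v hv' huv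

/-- Given a finite graph with disjoint blue edges `Eb` and red edges `Er`, where
every vertex has blue degree at most `δb ≥ 1` and red degree at most `δr ≥ 1`,
there are at most `δb·(2δr+2)` matchings `M i ⊆ Eb` such that every blue edge
belongs to some matching, and no matching covers both endpoints of a red edge. -/
theorem blue_red_matching_cover
    (V : Type) [Fintype V] (Eb Er : SimpleGraph V) (δb δr : ℕ)
    (hδb1 : 1 ≤ δb) (hδr1 : 1 ≤ δr)
    (hdisj : ∀ u v : V, ¬(Eb.Adj u v ∧ Er.Adj u v))
    (hb : ∀ v : V, ({u | Eb.Adj v u} : Set V).ncard ≤ δb)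
    (hr : ∀ v : V, ({u | Er.Adj v u} : Set V).ncard ≤ δr) :
    ∃ (γ : ℕ) (M : Fin γ → SimpleGraph V),
      γ ≤ δb * (2 * δr + 2) ∧
      (∀ i, M i ≤ Eb) ∧
      (∀ (i : Fin γ) (v u u' : V), (M i).Adj v u → (M i).Adj v u' → u = u') ∧
      (∀ u v : V, Eb.Adj u v → ∃ i, (M i).Adj u v) ∧
      (∀ (i : Fin γ) (u v : V), Er.Adj u v →
        ¬((∃ a, (M i).Adj u a) ∧ ∃ b, (M i).Adj v b)) := by
  classical
  set γ := δb * (2 * δr + 2) with hγ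
  have hγpos : 0 < γ := by positivity
  -- degrees are bounded
  have hdegb : ∀ v : V, Eb.degree v ≤ δb := by
    intro v
    have : (Eb.neighborFinset v : Set V) = {u | Eb.Adj v u} := by
      ext x; simp [SimpleGraph.mem_neighborFinset, SimpleGraph.Adj]
    rw [← SimpleGraph.card_neighborFinset_eq_degree, ← Set.ncard_coe_finset, this]
    exact hb v
  have hdegr : ∀ v : V, Er.degree v ≤ δr := by
    intro v
    have : (Er.neighborFinset v : Set V) = {u | Er.Adj v u} := by
      ext x; simp [SimpleGraph.mem_neighborFinset, SimpleGraph.Adj]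
    rw [← SimpleGraph.card_neighborFinset_eq_degree, ← Set.ncard_coe_finset, this]
    exact hr v
  -- the conflict graph on blue edges
  let B := Eb.edgeSet
  let H : SimpleGraph B :=
    { Adj := fun e f => e ≠ f ∧
        ((∃ x, x ∈ (e : Sym2 V) ∧ x ∈ (f : Sym2 V)) ∨
         (∃ x y, x ∈ (e : Sym2 V) ∧ y ∈ (f : Sym2 V) ∧ Er.Adj x y))
      symm := by
        constructor
        rintro e f ⟨hne, h⟩
        refine ⟨hne.symm, ?_⟩
        rcases h with ⟨x, hx, hx'⟩ | ⟨x, y, hx, hy, hxy⟩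
        · exact Or.inl ⟨x, hx', hx⟩
        · exact Or.inr ⟨y, x, hy, hx, hxy.symm⟩
      loopless := ⟨fun e h => h.1 rfl⟩ }
  -- degree bound for the conflict graph
  have hHdeg : ∀ e : B, ({f | H.Adj e f} : Set B).ncard < γ := by
    intro e
    obtain ⟨es, he⟩ := e
    induction es with
    | h u v =>
      have huv : Eb.Adj u v := he
      -- the finset of blue edges incident to the "danger zone" of e
      set S : Finset V := ({u, v} : Finset V) ∪ Er.neighborFinset u ∪ Er.neighborFinset v
        with hS
      set F : Finset (Sym2 V) := S.biUnion (fun w => Eb.incidenceFinset w) with hF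
      have heF : s(u, v) ∈ F := by
        refine Finset.mem_biUnion.mpr ⟨u, ?_, ?_⟩
        · simp [hS]
        · rw [SimpleGraph.mem_incidenceFinset]
          exact ⟨he, Sym2.mem_mk_left u v⟩
      have hFcard : F.card ≤ γ := by
        have h1 : F.card ≤ ∑ w ∈ S, (Eb.incidenceFinset w).card := Finset.card_biUnion_le
        have h2 : ∀ w ∈ S, (Eb.incidenceFinset w).card ≤ δb := by
          intro w _
          rw [SimpleGraph.card_incidenceFinset_eq_degree]
          exact hdegb w
        have h3 : ∑ w ∈ S, (Eb.incidenceFinset w).card ≤ S.card * δb := by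
          calc ∑ w ∈ S, (Eb.incidenceFinset w).card ≤ ∑ _w ∈ S, δb :=
                Finset.sum_le_sum h2
            _ = S.card * δb := by rw [Finset.sum_const, smul_eq_mul]
        have hScard : S.card ≤ 2 * δr + 2 := by
          calc S.card ≤ (({u, v} : Finset V) ∪ Er.neighborFinset u).card
                + (Er.neighborFinset v).card := Finset.card_union_le _ _
            _ ≤ (({u, v} : Finset V).card + (Er.neighborFinset u).card)
                + (Er.neighborFinset v).card := by
                  exact Nat.add_le_add_right (Finset.card_union_le _ _) _
            _ ≤ (2 + δr) + δr := by
                have hc1 : ({u, v} : Finset V).card ≤ 2 := Finset.card_insert_le u {v} |>.trans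
                  (by simp)
                have hc2 : (Er.neighborFinset u).card ≤ δr := by
                  rw [SimpleGraph.card_neighborFinset_eq_degree]; exact hdegr u
                have hc3 : (Er.neighborFinset v).card ≤ δr := by
                  rw [SimpleGraph.card_neighborFinset_eq_degree]; exact hdegr v
                omega
            _ ≤ 2 * δr + 2 := by omega
        calc F.card ≤ S.card * δb := h1.trans h3
          _ ≤ (2 * δr + 2) * δb := Nat.mul_le_mul_right _ hScard
          _ = γ := by rw [hγ]; ring
      -- map the adjacency set injectively into F \ {e}
      have hmaps : ∀ f : B, H.Adj ⟨s(u, v), he⟩ f → (f : Sym2 V) ∈ F ∧ (f : Sym2 V) ≠ s(u, v) := by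
        intro f hf
        obtain ⟨hne, hconf⟩ := hf
        constructor
        · rcases hconf with ⟨x, hx, hx'⟩ | ⟨x, y, hx, hy, hxy⟩
          · -- shared vertex: x ∈ {u,v}
            refine Finset.mem_biUnion.mpr ⟨x, ?_, ?_⟩
            · rcases Sym2.mem_iff.mp hx with rfl | rfl <;> simp [hS]
            · rw [SimpleGraph.mem_incidenceFinset]; exact ⟨f.2, hx'⟩
          · -- red connection: y is a red neighbor of u or v
            refine Finset.mem_biUnion.mpr ⟨y, ?_, ?_⟩
            · rcases Sym2.mem_iff.mp hx with rfl | rfl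
              · simp [hS, SimpleGraph.mem_neighborFinset, hxy]
              · simp [hS, SimpleGraph.mem_neighborFinset, hxy]
            · rw [SimpleGraph.mem_incidenceFinset]; exact ⟨f.2, hy⟩
        · intro hval
          exact hne (Subtype.ext hval).symm
      have hinj : Set.InjOn (fun f : B => (f : Sym2 V))
          {f | H.Adj ⟨s(u, v), he⟩ f} := fun f _ g _ hfg => Subtype.ext hfg
      have hle : ({f | H.Adj ⟨s(u, v), he⟩ f} : Set B).ncard
          ≤ ((F : Set (Sym2 V)) \ {s(u, v)}).ncard := by
        refine Set.ncard_le_ncard_of_injOn (fun f => (f : Sym2 V)) ?_ hinj (Set.toFinite _)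
        intro f hf
        obtain ⟨h1, h2⟩ := hmaps f hf
        exact ⟨h1, h2⟩
      have hdiff : ((F : Set (Sym2 V)) \ {s(u, v)}).ncard < γ := by
        have hmem : s(u, v) ∈ (F : Set (Sym2 V)) := heF
        have := Set.ncard_diff_singleton_lt_of_mem hmem (Set.toFinite _)
        calc ((F : Set (Sym2 V)) \ {s(u, v)}).ncard < (F : Set (Sym2 V)).ncard := this
          _ = F.card := Set.ncard_coe_finset F
          _ ≤ γ := hFcard
      exact lt_of_le_of_lt hle hdiff
  -- color the conflict graph greedily
  have : Finite B := Subtype.finite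
  have : Fintype B := Fintype.ofFinite B
  obtain ⟨C, hC⟩ := greedy_coloring H γ hγpos hHdeg
  -- define the matchings as color classes
  refine ⟨γ, fun i =>
    { Adj := fun x y => ∃ h : Eb.Adj x y, C ⟨s(x, y), h⟩ = i
      symm := by
        constructor
        rintro x y ⟨h, hc⟩
        refine ⟨h.symm, ?_⟩
        have : (⟨s(y, x), h.symm⟩ : B) = ⟨s(x, y), h⟩ := Subtype.ext (Sym2.eq_swap)
        rw [this]; exact hc
      loopless := ⟨fun x ⟨h, _⟩ => Eb.irrefl h⟩ }, le_refl _, ?_, ?_, ?_, ?_⟩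
  · rintro i x y ⟨h, _⟩; exact h
  · -- each color class is a matching
    rintro i v u u' ⟨h1, hc1⟩ ⟨h2, hc2⟩
    by_contra hne
    have hedgene : (⟨s(v, u), h1⟩ : B) ≠ ⟨s(v, u'), h2⟩ := by
      intro h
      exact hne (Sym2.congr_right.mp (congrArg Subtype.val h))
    have hadj : H.Adj ⟨s(v, u), h1⟩ ⟨s(v, u'), h2⟩ :=
      ⟨hedgene, Or.inl ⟨v, Sym2.mem_mk_left v u, Sym2.mem_mk_left v u'⟩⟩
    exact hC _ _ hadj (hc1.trans hc2.symm)
  · -- every blue edge is covered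
    intro u v h
    exact ⟨C ⟨s(u, v), h⟩, h, rfl⟩
  · -- no color class covers both endpoints of a red edge
    rintro i u v hr_uv ⟨⟨a, ha, hca⟩, ⟨b, hbz, hcb⟩⟩
    by_cases hef : (⟨s(u, a), ha⟩ : B) = ⟨s(v, b), hbz⟩
    · -- same blue edge containing both u and v: contradicts disjointness
      have hveq : v ∈ s(u, a) := by
        have : (s(v, b) : Sym2 V) = s(u, a) := (congrArg Subtype.val hef).symm
        rw [← this]; exact Sym2.mem_mk_left v b
      rcases Sym2.mem_iff.mp hveq with h1 | h1
      · exact Er.irrefl (h1 ▸ hr_uv)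
      · exact hdisj u v ⟨h1 ▸ ha, hr_uv⟩
    · have hadj : H.Adj ⟨s(u, a), ha⟩ ⟨s(v, b), hbz⟩ :=
        ⟨hef, Or.inr ⟨u, v, Sym2.mem_mk_left u a, Sym2.mem_mk_left v b, hr_uv⟩⟩
      exact hC _ _ hadj (hca.trans hcb.symm)
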